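/- Assume p_i(k) > 0 for all ψ ∈ Ψ, i ∈ 𝒩, and k ∈ ℕ₀. If the switched Markov jump linear system (𝒢,Π,Ψ,p(0)) is uniformly mean square strictly contractive with constant γ ∈ (0,1), then with ν := 1 − γ² > 0 one has 𝒲(i, X̃_ψ(i,k+1,T)) ≥ ν I (in particular 𝒲(i, X̃_ψ(i,k+1,T)) is positive definite, hence invertible, so the Riccati recursion is well defined) for all ψ ∈ Ψ, all i ∈ 𝒩, all horizons T ∈ ℕ₀, and all 0 ≤ k ≤ T. -/

import Mathlib

open Matrix
open scoped Classical

noncomputable section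

namespace SMJLS

/-- The ordered product `Φ = A(t(d−1)) ⋯ A(t 1) A(t 0)` along a tuple of modes. -/
def pathProd {n N : ℕ} (Am : Fin N → Matrix (Fin n) (Fin n) ℝ) {d : ℕ}
    (t : Fin d → Fin N) : Matrix (Fin n) (Fin n) ℝ :=
  (((List.finRange d).reverse).map fun l => Am (t l)).prod

/-- `Gmat Am Pm ψ i j k` is `E[Φ(k,j)ᵀ Φ(k,j) ∣ θ(j) = i]`, written as the explicit sum over
tuples `(i_j, …, i_{k−1}) ∈ 𝒩^{k−j}` with `i_j = i` of
`(∏_{l=j+1}^{k−1} π_{i_{l−1} i_l}(ψ(l))) • ΦᵀΦ` where `Φ = A(i_{k−1}) ⋯ A(i_j)`;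
by convention it is `I` when `k = j`. -/
def Gmat {n N J : ℕ} (Am : Fin N → Matrix (Fin n) (Fin n) ℝ)
    (Pm : Fin J → Matrix (Fin N) (Fin N) ℝ) (ψ : ℕ → Fin J) (i : Fin N) (j k : ℕ) :
    Matrix (Fin n) (Fin n) ℝ :=
  if k ≤ j then 1
  else
    ∑ t : Fin (k - j - 1 + 1) → Fin N,
      (if t 0 = i then
          ∏ l : Fin (k - j - 1), Pm (ψ (j + (l : ℕ) + 1)) (t l.castSucc) (t l.succ)
        else 0) • ((pathProd Am t)ᵀ * pathProd Am t)

/-- Exponential mean square stability (of a single switching sequence) with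
explicit constants `c` and `lam`:  `G_ψ(i,j,k) ≤ c λ^(k−j) I` in the Loewner order. -/
def EMSSWith {n N J : ℕ} (Am : Fin N → Matrix (Fin n) (Fin n) ℝ)
    (Pm : Fin J → Matrix (Fin N) (Fin N) ℝ) (c lam : ℝ) (ψ : ℕ → Fin J) : Prop :=
  ∀ (i : Fin N) (j k : ℕ), j ≤ k →
    ((c * lam ^ (k - j)) • (1 : Matrix (Fin n) (Fin n) ℝ) - Gmat Am Pm ψ i j k).PosSemidef

/-- Uniform exponential mean square stability of the switched Markov jump linear system. -/
def UEMSS {n N J : ℕ} (Am : Fin N → Matrix (Fin n) (Fin n) ℝ)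
    (Pm : Fin J → Matrix (Fin N) (Fin N) ℝ) (Ψ : Set (ℕ → Fin J)) : Prop :=
  ∃ c lam : ℝ, 1 ≤ c ∧ 0 ≤ lam ∧ lam < 1 ∧ ∀ ψ ∈ Ψ, EMSSWith Am Pm c lam ψ

/-- Probability of the cylinder `{θ(0) = path 0, …, θ(k) = path k}`. -/
def weight {N J : ℕ} (Pm : Fin J → Matrix (Fin N) (Fin N) ℝ) (ψ : ℕ → Fin J)
    (p0 : Fin N → ℝ) (k : ℕ) (path : Fin (k + 1) → Fin N) : ℝ :=
  p0 (path 0) * ∏ l : Fin k, Pm (ψ ((l : ℕ) + 1)) (path l.castSucc) (path l.succ)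

/-- Expectation of a functional `g` of the chain which depends only on `θ(0), …, θ(k)`. -/
def pexp {N J : ℕ} (Pm : Fin J → Matrix (Fin N) (Fin N) ℝ) (ψ : ℕ → Fin J)
    (p0 : Fin N → ℝ) (k : ℕ) (g : (ℕ → Fin N) → ℝ) : ℝ :=
  ∑ path : Fin (k + 1) → Fin N,
    weight Pm ψ p0 k path *
      g (fun l => path ⟨min l k, Nat.lt_succ_of_le (min_le_right l k)⟩)

/-- A disturbance process is adapted when `w(k)` is measurable with respect to
`σ(θ(0),…,θ(k))`, i.e. `w(k)` is a function of the first `k+1` modes. -/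
def Adapted {N m : ℕ} (w : ℕ → (ℕ → Fin N) → Fin m → ℝ) : Prop :=
  ∀ (k : ℕ) (ω ω' : ℕ → Fin N), (∀ l, l ≤ k → ω l = ω' l) → w k ω = w k ω'

/-- State trajectory: `x(k+1) = A(θ(k)) x(k) + B(θ(k)) w(k)`, `x(0) = x0`. -/
def traj {n m N : ℕ} (Am : Fin N → Matrix (Fin n) (Fin n) ℝ)
    (Bm : Fin N → Matrix (Fin n) (Fin m) ℝ) (x0 : (ℕ → Fin N) → Fin n → ℝ)
    (w : ℕ → (ℕ → Fin N) → Fin m → ℝ) : ℕ → (ℕ → Fin N) → Fin n → ℝ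
  | 0, ω => x0 ω
  | k + 1, ω => (Am (ω k)).mulVec (traj Am Bm x0 w k ω) + (Bm (ω k)).mulVec (w k ω)

/-- Error trajectory: `z(k) = C(θ(k)) x(k) + D(θ(k)) w(k)`. -/
def errv {n m p N : ℕ} (Am : Fin N → Matrix (Fin n) (Fin n) ℝ)
    (Bm : Fin N → Matrix (Fin n) (Fin m) ℝ) (Cm : Fin N → Matrix (Fin p) (Fin n) ℝ)
    (Dm : Fin N → Matrix (Fin p) (Fin m) ℝ) (x0 : (ℕ → Fin N) → Fin n → ℝ)
    (w : ℕ → (ℕ → Fin N) → Fin m → ℝ) (k : ℕ) (ω : ℕ → Fin N) : Fin p → ℝ :=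
  (Cm (ω k)).mulVec (traj Am Bm x0 w k ω) + (Dm (ω k)).mulVec (w k ω)

/-- `E[‖v(k)‖²]` for an adapted process `v`. -/
def energy {N J d : ℕ} (Pm : Fin J → Matrix (Fin N) (Fin N) ℝ) (ψ : ℕ → Fin J)
    (p0 : Fin N → ℝ) (v : ℕ → (ℕ → Fin N) → Fin d → ℝ) (k : ℕ) : ℝ :=
  pexp Pm ψ p0 k (fun ω => v k ω ⬝ᵥ v k ω)

/-- Mean square strict contractiveness with constant `γ` for the single switching
sequence `ψ` : whenever `x(0) = 0`, `‖z‖_{2,e} ≤ γ ‖w‖_{2,e}` for every admissible `w`. -/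
def ContractiveWith {n m p N J : ℕ} (Am : Fin N → Matrix (Fin n) (Fin n) ℝ)
    (Bm : Fin N → Matrix (Fin n) (Fin m) ℝ) (Cm : Fin N → Matrix (Fin p) (Fin n) ℝ)
    (Dm : Fin N → Matrix (Fin p) (Fin m) ℝ) (Pm : Fin J → Matrix (Fin N) (Fin N) ℝ)
    (γ : ℝ) (ψ : ℕ → Fin J) (p0 : Fin N → ℝ) : Prop :=
  ∀ w : ℕ → (ℕ → Fin N) → Fin m → ℝ, Adapted w →
    Summable (fun k => energy Pm ψ p0 w k) →
    Summable (fun k => energy Pm ψ p0 (errv Am Bm Cm Dm (fun _ => 0) w) k) ∧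
      ∑' k, energy Pm ψ p0 (errv Am Bm Cm Dm (fun _ => 0) w) k ≤
        γ ^ 2 * ∑' k, energy Pm ψ p0 w k

/-- Uniform mean square strict contractiveness of the switched system. -/
def UMSSC {n m p N J : ℕ} (Am : Fin N → Matrix (Fin n) (Fin n) ℝ)
    (Bm : Fin N → Matrix (Fin n) (Fin m) ℝ) (Cm : Fin N → Matrix (Fin p) (Fin n) ℝ)
    (Dm : Fin N → Matrix (Fin p) (Fin m) ℝ) (Pm : Fin J → Matrix (Fin N) (Fin N) ℝ)
    (Ψ : Set (ℕ → Fin J)) (p0 : Fin N → ℝ) : Prop :=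
  ∃ γ : ℝ, 0 < γ ∧ γ < 1 ∧ ∀ ψ ∈ Ψ, ContractiveWith Am Bm Cm Dm Pm γ ψ p0

/-- Marginal distribution `p(k) = p(0) Π(ψ(1)) ⋯ Π(ψ(k))` of the chain. -/
def pdist {N J : ℕ} (Pm : Fin J → Matrix (Fin N) (Fin N) ℝ) (ψ : ℕ → Fin J)
    (p0 : Fin N → ℝ) : ℕ → Fin N → ℝ
  | 0 => p0
  | k + 1 => Matrix.vecMul (pdist Pm ψ p0 k) (Pm (ψ (k + 1)))

/-- `ℒ(i,X) = A(i)ᵀ X A(i) + C(i)ᵀ C(i)`. -/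
def opL {n p N : ℕ} (Am : Fin N → Matrix (Fin n) (Fin n) ℝ)
    (Cm : Fin N → Matrix (Fin p) (Fin n) ℝ) (i : Fin N) (X : Matrix (Fin n) (Fin n) ℝ) :
    Matrix (Fin n) (Fin n) ℝ :=
  (Am i)ᵀ * X * Am i + (Cm i)ᵀ * Cm i

/-- `ℛ(i,X) = B(i)ᵀ X A(i) + D(i)ᵀ C(i)`. -/
def opR {n m p N : ℕ} (Am : Fin N → Matrix (Fin n) (Fin n) ℝ)
    (Bm : Fin N → Matrix (Fin n) (Fin m) ℝ) (Cm : Fin N → Matrix (Fin p) (Fin n) ℝ)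
    (Dm : Fin N → Matrix (Fin p) (Fin m) ℝ) (i : Fin N) (X : Matrix (Fin n) (Fin n) ℝ) :
    Matrix (Fin m) (Fin n) ℝ :=
  (Bm i)ᵀ * X * Am i + (Dm i)ᵀ * Cm i

/-- `𝒲(i,X) = I − B(i)ᵀ X B(i) − D(i)ᵀ D(i)`. -/
def opW {n m p N : ℕ} (Bm : Fin N → Matrix (Fin n) (Fin m) ℝ)
    (Dm : Fin N → Matrix (Fin p) (Fin m) ℝ) (i : Fin N) (X : Matrix (Fin n) (Fin n) ℝ) :
    Matrix (Fin m) (Fin m) ℝ :=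
  1 - (Bm i)ᵀ * X * Bm i - (Dm i)ᵀ * Dm i

/-- `𝒮(i,X) = ℒ(i,X) + ℛ(i,X)ᵀ 𝒲(i,X)⁻¹ ℛ(i,X)`. -/
def opS {n m p N : ℕ} (Am : Fin N → Matrix (Fin n) (Fin n) ℝ)
    (Bm : Fin N → Matrix (Fin n) (Fin m) ℝ) (Cm : Fin N → Matrix (Fin p) (Fin n) ℝ)
    (Dm : Fin N → Matrix (Fin p) (Fin m) ℝ) (i : Fin N) (X : Matrix (Fin n) (Fin n) ℝ) :
    Matrix (Fin n) (Fin n) ℝ :=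
  opL Am Cm i X + (opR Am Bm Cm Dm i X)ᵀ * (opW Bm Dm i X)⁻¹ * opR Am Bm Cm Dm i X

/-- `ℱ(i,X) = A(i) + B(i) 𝒲(i,X)⁻¹ ℛ(i,X)`. -/
def opF {n m p N : ℕ} (Am : Fin N → Matrix (Fin n) (Fin n) ℝ)
    (Bm : Fin N → Matrix (Fin n) (Fin m) ℝ) (Cm : Fin N → Matrix (Fin p) (Fin n) ℝ)
    (Dm : Fin N → Matrix (Fin p) (Fin m) ℝ) (i : Fin N) (X : Matrix (Fin n) (Fin n) ℝ) :
    Matrix (Fin n) (Fin n) ℝ :=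
  Am i + Bm i * (opW Bm Dm i X)⁻¹ * opR Am Bm Cm Dm i X

/-- Backwards recursion for the perturbed finite-horizon Riccati difference equation,
indexed by the number `d = T + 1 − k` of remaining steps. -/
def ricAuxE {n m p N J : ℕ} (Am : Fin N → Matrix (Fin n) (Fin n) ℝ)
    (Bm : Fin N → Matrix (Fin n) (Fin m) ℝ) (Cm : Fin N → Matrix (Fin p) (Fin n) ℝ)
    (Dm : Fin N → Matrix (Fin p) (Fin m) ℝ) (Pm : Fin J → Matrix (Fin N) (Fin N) ℝ)
    (ψ : ℕ → Fin J) (T : ℕ) (ε : ℝ) : ℕ → Fin N → Matrix (Fin n) (Fin n) ℝ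
  | 0, _ => 0
  | d + 1, i =>
      opS Am Bm Cm Dm i
          (∑ j, Pm (ψ (T - d + 1)) i j • ricAuxE Am Bm Cm Dm Pm ψ T ε d j) + ε • 1

/-- The perturbed finite-horizon Riccati solution `X_ψ(i,k,T,ε)`:
`X_ψ(i,T+1,T,ε) = 0` and `X_ψ(i,k,T,ε) = 𝒮(i, X̃_ψ(i,k+1,T,ε)) + εI` where
`X̃_ψ(i,k+1,T,ε) = Σ_j π_{ij}(ψ(k+1)) X_ψ(j,k+1,T,ε)`. -/
def ricE {n m p N J : ℕ} (Am : Fin N → Matrix (Fin n) (Fin n) ℝ)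
    (Bm : Fin N → Matrix (Fin n) (Fin m) ℝ) (Cm : Fin N → Matrix (Fin p) (Fin n) ℝ)
    (Dm : Fin N → Matrix (Fin p) (Fin m) ℝ) (Pm : Fin J → Matrix (Fin N) (Fin N) ℝ)
    (ψ : ℕ → Fin J) (i : Fin N) (k T : ℕ) (ε : ℝ) : Matrix (Fin n) (Fin n) ℝ :=
  ricAuxE Am Bm Cm Dm Pm ψ T ε (T + 1 - k) i

/-- The (unperturbed) finite-horizon Riccati solution `X_ψ(i,k,T)`. -/
def ric {n m p N J : ℕ} (Am : Fin N → Matrix (Fin n) (Fin n) ℝ)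
    (Bm : Fin N → Matrix (Fin n) (Fin m) ℝ) (Cm : Fin N → Matrix (Fin p) (Fin n) ℝ)
    (Dm : Fin N → Matrix (Fin p) (Fin m) ℝ) (Pm : Fin J → Matrix (Fin N) (Fin N) ℝ)
    (ψ : ℕ → Fin J) (i : Fin N) (k T : ℕ) : Matrix (Fin n) (Fin n) ℝ :=
  ricE Am Bm Cm Dm Pm ψ i k T 0

/-- `ℬ(i,X,Y) = [[A,B],[C,D]]ᵀ diag(X,I) [[A,B],[C,D]] − diag(Y,I)`. -/
def bigB {n m p N : ℕ} (Am : Fin N → Matrix (Fin n) (Fin n) ℝ)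
    (Bm : Fin N → Matrix (Fin n) (Fin m) ℝ) (Cm : Fin N → Matrix (Fin p) (Fin n) ℝ)
    (Dm : Fin N → Matrix (Fin p) (Fin m) ℝ) (i : Fin N)
    (X Y : Matrix (Fin n) (Fin n) ℝ) : Matrix (Fin n ⊕ Fin m) (Fin n ⊕ Fin m) ℝ :=
  (Matrix.fromBlocks (Am i) (Bm i) (Cm i) (Dm i))ᵀ *
      Matrix.fromBlocks X 0 0 (1 : Matrix (Fin p) (Fin p) ℝ) *
      Matrix.fromBlocks (Am i) (Bm i) (Cm i) (Dm i) -
    Matrix.fromBlocks Y 0 0 (1 : Matrix (Fin m) (Fin m) ℝ)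

/-- The switching window `ψ_M(k) = (ψ(k+1), …, ψ(k+M))`. -/
def window {J : ℕ} (ψ : ℕ → Fin J) (M k : ℕ) : Fin M → Fin J :=
  fun l => ψ (k + (l : ℕ) + 1)

/-- `Ψ_M`, the set of all windows of length `M` occurring in `Ψ`. -/
def windowSet {J : ℕ} (Ψ : Set (ℕ → Fin J)) (M : ℕ) : Set (Fin M → Fin J) :=
  { r | ∃ ψ ∈ Ψ, ∃ t : ℕ, r = window ψ M t }

/-- Closed-loop matrix `ℱ(i, X̃_ψ(i, l+1, T, ε))` at time `l`. -/
def Fcl {n m p N J : ℕ} (Am : Fin N → Matrix (Fin n) (Fin n) ℝ)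
    (Bm : Fin N → Matrix (Fin n) (Fin m) ℝ) (Cm : Fin N → Matrix (Fin p) (Fin n) ℝ)
    (Dm : Fin N → Matrix (Fin p) (Fin m) ℝ) (Pm : Fin J → Matrix (Fin N) (Fin N) ℝ)
    (ψ : ℕ → Fin J) (T : ℕ) (ε : ℝ) (i : Fin N) (l : ℕ) : Matrix (Fin n) (Fin n) ℝ :=
  opF Am Bm Cm Dm i (∑ j, Pm (ψ (l + 1)) i j • ricE Am Bm Cm Dm Pm ψ j (l + 1) T ε)

/-- Ordered closed-loop product `φ = F(t(d−1), j+d−1) ⋯ F(t 0, j)`. -/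
def clPathProd {n N : ℕ} (F : Fin N → ℕ → Matrix (Fin n) (Fin n) ℝ) (j : ℕ) {d : ℕ}
    (t : Fin d → Fin N) : Matrix (Fin n) (Fin n) ℝ :=
  (((List.finRange d).reverse).map fun l => F (t l) (j + (l : ℕ))).prod

/-- Closed-loop conditional second moment `H_ψ(i,j,k,T,ε)`. -/
def Hmat {n m p N J : ℕ} (Am : Fin N → Matrix (Fin n) (Fin n) ℝ)
    (Bm : Fin N → Matrix (Fin n) (Fin m) ℝ) (Cm : Fin N → Matrix (Fin p) (Fin n) ℝ)
    (Dm : Fin N → Matrix (Fin p) (Fin m) ℝ) (Pm : Fin J → Matrix (Fin N) (Fin N) ℝ)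
    (ψ : ℕ → Fin J) (T : ℕ) (ε : ℝ) (i : Fin N) (j k : ℕ) :
    Matrix (Fin n) (Fin n) ℝ :=
  if k ≤ j then 1
  else
    ∑ t : Fin (k - j - 1 + 1) → Fin N,
      (if t 0 = i then
          ∏ l : Fin (k - j - 1), Pm (ψ (j + (l : ℕ) + 1)) (t l.castSucc) (t l.succ)
        else 0) •
        ((clPathProd (Fcl Am Bm Cm Dm Pm ψ T ε) j t)ᵀ *
          clPathProd (Fcl Am Bm Cm Dm Pm ψ T ε) j t)

/-- `Y_ψ(i,k) = Σ_{j=k}^{k+M+1} E[Φ(j,k)ᵀΦ(j,k) ∣ θ(k)=i]`. -/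
def Ysum {n N J : ℕ} (Am : Fin N → Matrix (Fin n) (Fin n) ℝ)
    (Pm : Fin J → Matrix (Fin N) (Fin N) ℝ) (ψ : ℕ → Fin J) (M : ℕ) (i : Fin N)
    (k : ℕ) : Matrix (Fin n) (Fin n) ℝ :=
  ∑ j ∈ Finset.range (M + 2), Gmat Am Pm ψ i k (k + j)


section Helpers
variable {a b : ℕ}

lemma dot_self_nonneg (v : Fin a → ℝ) : 0 ≤ v ⬝ᵥ v :=
  Finset.sum_nonneg fun i _ => mul_self_nonneg _

lemma dot_self_pos {v : Fin a → ℝ} (hv : v ≠ 0) : 0 < v ⬝ᵥ v := by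
  rcases Function.ne_iff.mp hv with ⟨i, hi⟩
  have hne : v i ≠ 0 := by simpa using hi
  exact Finset.sum_pos' (fun j _ => mul_self_nonneg _)
    ⟨i, Finset.mem_univ i, mul_self_pos.mpr hne⟩

lemma quad_transform (M : Matrix (Fin a) (Fin b) ℝ) (X : Matrix (Fin a) (Fin a) ℝ)
    (x : Fin b → ℝ) : x ⬝ᵥ (Mᵀ * X * M) *ᵥ x = (M *ᵥ x) ⬝ᵥ X *ᵥ (M *ᵥ x) := by
  rw [Matrix.mul_assoc, ← Matrix.mulVec_mulVec, ← Matrix.mulVec_mulVec,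
    Matrix.dotProduct_mulVec, Matrix.vecMul_transpose]

lemma quad_transform' (M : Matrix (Fin a) (Fin b) ℝ) (x : Fin b → ℝ) :
    x ⬝ᵥ (Mᵀ * M) *ᵥ x = (M *ᵥ x) ⬝ᵥ (M *ᵥ x) := by
  rw [← Matrix.mulVec_mulVec, Matrix.dotProduct_mulVec, Matrix.vecMul_transpose]

lemma isHermitian_of_transpose {M : Matrix (Fin a) (Fin a) ℝ} (h : Mᵀ = M) :
    M.IsHermitian := by
  have h2 : Mᴴ = Mᵀ := by ext i j; simp [Matrix.conjTranspose_apply]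
  rw [Matrix.IsHermitian, h2, h]

end Helpers

section RicciSection
variable {n m p N J : ℕ} (Am : Fin N → Matrix (Fin n) (Fin n) ℝ)
  (Bm : Fin N → Matrix (Fin n) (Fin m) ℝ) (Cm : Fin N → Matrix (Fin p) (Fin n) ℝ)
  (Dm : Fin N → Matrix (Fin p) (Fin m) ℝ) (Pm : Fin J → Matrix (Fin N) (Fin N) ℝ)
  (ψ : ℕ → Fin J)

lemma opW_transpose (i : Fin N) {X : Matrix (Fin n) (Fin n) ℝ} (hX : Xᵀ = X) :
    (opW Bm Dm i X)ᵀ = opW Bm Dm i X := by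
  simp [opW, Matrix.transpose_sub, Matrix.transpose_mul, Matrix.mul_assoc, hX]

lemma opWinv_transpose (i : Fin N) {X : Matrix (Fin n) (Fin n) ℝ} (hX : Xᵀ = X) :
    ((opW Bm Dm i X)⁻¹)ᵀ = (opW Bm Dm i X)⁻¹ := by
  rw [Matrix.transpose_nonsing_inv, opW_transpose _ _ _ hX]

lemma opS_transpose (i : Fin N) {X : Matrix (Fin n) (Fin n) ℝ} (hX : Xᵀ = X) :
    (opS Am Bm Cm Dm i X)ᵀ = opS Am Bm Cm Dm i X := by
  unfold opS opL
  rw [Matrix.transpose_add, Matrix.transpose_add]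
  congr 1
  · congr 1 <;> simp [Matrix.transpose_mul, Matrix.mul_assoc, hX]
  · rw [Matrix.transpose_mul, Matrix.transpose_mul, Matrix.transpose_transpose,
      opWinv_transpose _ _ _ hX, Matrix.mul_assoc]

lemma ric_top (i : Fin N) (T : ℕ) : ric Am Bm Cm Dm Pm ψ i (T + 1) T = 0 := by
  simp [ric, ricE, ricAuxE]

lemma ric_unfold (i : Fin N) {k T : ℕ} (hk : k ≤ T) :
    ric Am Bm Cm Dm Pm ψ i k T =
      opS Am Bm Cm Dm i
        (∑ j, Pm (ψ (k + 1)) i j • ric Am Bm Cm Dm Pm ψ j (k + 1) T) := by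
  have h1 : T + 1 - k = (T - k) + 1 := by omega
  have h2 : T - (T - k) = k := by omega
  have h3 : T + 1 - (k + 1) = T - k := by omega
  unfold ric ricE
  rw [h1, h3]
  show ricAuxE Am Bm Cm Dm Pm ψ T 0 (T - k + 1) i = _
  rw [ricAuxE, h2]
  simp

lemma ric_symm (i : Fin N) (k T : ℕ) :
    (ric Am Bm Cm Dm Pm ψ i k T)ᵀ = ric Am Bm Cm Dm Pm ψ i k T := by
  suffices h : ∀ d (a : Fin N),
      (ricAuxE Am Bm Cm Dm Pm ψ T 0 d a)ᵀ = ricAuxE Am Bm Cm Dm Pm ψ T 0 d a by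
    exact h _ i
  intro d
  induction d with
  | zero => intro a; simp [ricAuxE]
  | succ d ih =>
    intro a
    rw [ricAuxE]
    have hX : (∑ j, Pm (ψ (T - d + 1)) a j • ricAuxE Am Bm Cm Dm Pm ψ T 0 d j)ᵀ =
        ∑ j, Pm (ψ (T - d + 1)) a j • ricAuxE Am Bm Cm Dm Pm ψ T 0 d j := by
      rw [Matrix.transpose_sum]
      exact Finset.sum_congr rfl fun j _ => by rw [Matrix.transpose_smul, ih j]
    rw [Matrix.transpose_add, opS_transpose _ _ _ _ _ hX]
    simp

lemma ricSum_symm (i : Fin N) (s : Fin J) (k T : ℕ) :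
    (∑ j, Pm s i j • ric Am Bm Cm Dm Pm ψ j k T)ᵀ =
      ∑ j, Pm s i j • ric Am Bm Cm Dm Pm ψ j k T := by
  rw [Matrix.transpose_sum]
  exact Finset.sum_congr rfl fun j _ => by
    rw [Matrix.transpose_smul, ric_symm]

/-- Completion of squares: matrix identity. -/
lemma opS_decomp (i : Fin N) {X : Matrix (Fin n) (Fin n) ℝ} (hX : Xᵀ = X)
    (hW : IsUnit (opW Bm Dm i X).det) :
    opS Am Bm Cm Dm i X =
      (opF Am Bm Cm Dm i X)ᵀ * X * opF Am Bm Cm Dm i X +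
        (Cm i + Dm i * ((opW Bm Dm i X)⁻¹ * opR Am Bm Cm Dm i X))ᵀ *
          (Cm i + Dm i * ((opW Bm Dm i X)⁻¹ * opR Am Bm Cm Dm i X)) -
        ((opW Bm Dm i X)⁻¹ * opR Am Bm Cm Dm i X)ᵀ *
          ((opW Bm Dm i X)⁻¹ * opR Am Bm Cm Dm i X) := by
  have hWK : opW Bm Dm i X * ((opW Bm Dm i X)⁻¹ * opR Am Bm Cm Dm i X) =
      opR Am Bm Cm Dm i X := by
    rw [← Matrix.mul_assoc, Matrix.mul_nonsing_inv _ hW, Matrix.one_mul]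
  have hKt : ((opW Bm Dm i X)⁻¹ * opR Am Bm Cm Dm i X)ᵀ * opW Bm Dm i X =
      (opR Am Bm Cm Dm i X)ᵀ := by
    have h := congrArg Matrix.transpose hWK
    rwa [Matrix.transpose_mul, opW_transpose _ _ _ hX] at h
  generalize hKg : (opW Bm Dm i X)⁻¹ * opR Am Bm Cm Dm i X = K at *
  -- relation 1 : (BᵀXB + DᵀD) * K = K - R
  have hrel1 : ((Bm i)ᵀ * X * Bm i + (Dm i)ᵀ * Dm i) * K = K - opR Am Bm Cm Dm i X := by
    have h := hWK
    rw [opW, Matrix.sub_mul, Matrix.sub_mul, Matrix.one_mul] at h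
    rw [Matrix.add_mul, ← h]
    abel
  -- relation 2 : Rᵀ * K = Kᵀ * R
  have hrel2 : (opR Am Bm Cm Dm i X)ᵀ * K = Kᵀ * opR Am Bm Cm Dm i X := by
    rw [← hKt, Matrix.mul_assoc, hWK]
  -- opS = L + Kᵀ * R
  have hS : opS Am Bm Cm Dm i X = opL Am Cm i X + Kᵀ * opR Am Bm Cm Dm i X := by
    unfold opS
    congr 1
    rw [Matrix.mul_assoc, hKg, ← hrel2, ← hKt, Matrix.mul_assoc, hWK]
  have hF : opF Am Bm Cm Dm i X = Am i + Bm i * K := by rw [opF, Matrix.mul_assoc, hKg]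
  rw [hS, hF]
  have hRt : (opR Am Bm Cm Dm i X)ᵀ = (Am i)ᵀ * X * Bm i + (Cm i)ᵀ * Dm i := by
    simp [opR, Matrix.transpose_add, Matrix.transpose_mul, Matrix.mul_assoc, hX]
  have expand :
      (Am i + Bm i * K)ᵀ * X * (Am i + Bm i * K) +
        (Cm i + Dm i * K)ᵀ * (Cm i + Dm i * K) - Kᵀ * K =
      ((Am i)ᵀ * X * Am i + (Cm i)ᵀ * Cm i) +
        (((Am i)ᵀ * X * Bm i + (Cm i)ᵀ * Dm i) * K) +
        (Kᵀ * ((Bm i)ᵀ * X * Am i + (Dm i)ᵀ * Cm i)) +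
        (Kᵀ * (((Bm i)ᵀ * X * Bm i + (Dm i)ᵀ * Dm i) * K)) - Kᵀ * K := by
    simp only [Matrix.transpose_add, Matrix.transpose_mul, Matrix.add_mul,
      Matrix.mul_add, Matrix.mul_assoc]
    abel
  rw [expand, hrel1, ← hRt, hrel2, Matrix.mul_sub]
  have hR2 : Kᵀ * ((Bm i)ᵀ * X * Am i + (Dm i)ᵀ * Cm i) =
      Kᵀ * opR Am Bm Cm Dm i X := by rw [opR]
  rw [hR2, opL]
  abel

end RicciSection


section PexpSection
variable {N J : ℕ} (Pm : Fin J → Matrix (Fin N) (Fin N) ℝ)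
  (ψ : ℕ → Fin J) (p0 : Fin N → ℝ)

/-- clamp a finite path to an infinite one -/
def clamp {N : ℕ} (k : ℕ) (path : Fin (k + 1) → Fin N) : ℕ → Fin N :=
  fun l => path ⟨min l k, Nat.lt_succ_of_le (min_le_right l k)⟩

lemma pexp_def (k : ℕ) (g : (ℕ → Fin N) → ℝ) :
    pexp Pm ψ p0 k g = ∑ path : Fin (k + 1) → Fin N,
      weight Pm ψ p0 k path * g (clamp k path) := rfl

lemma clamp_le {k : ℕ} (path : Fin (k + 1) → Fin N) {t : ℕ} (ht : t ≤ k) :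
    clamp k path t = path ⟨t, Nat.lt_succ_of_le ht⟩ := by
  simp [clamp, min_eq_left ht]

lemma clamp_last (k : ℕ) (path : Fin (k + 1) → Fin N) :
    clamp k path k = path (Fin.last k) := by
  rw [clamp_le path le_rfl]; rfl

lemma snoc_nat {k : ℕ} (q : Fin (k + 1) → Fin N) (j : Fin N) {t : ℕ} (ht : t ≤ k)
    (h2 : t < k + 2) :
    (Fin.snoc q j : Fin (k + 2) → Fin N) ⟨t, h2⟩ = q ⟨t, Nat.lt_succ_of_le ht⟩ := by
  have h : (⟨t, h2⟩ : Fin (k + 2)) = Fin.castSucc ⟨t, Nat.lt_succ_of_le ht⟩ := rfl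
  rw [h, Fin.snoc_castSucc]

lemma clamp_snoc_le {k : ℕ} (q : Fin (k + 1) → Fin N) (j : Fin N) {t : ℕ} (ht : t ≤ k) :
    clamp (k + 1) (Fin.snoc q j) t = clamp k q t := by
  rw [clamp_le _ (ht.trans (Nat.le_succ k)), clamp_le _ ht, snoc_nat q j ht]

lemma clamp_snoc_last {k : ℕ} (q : Fin (k + 1) → Fin N) (j : Fin N) :
    clamp (k + 1) (Fin.snoc q j) (k + 1) = j := by
  rw [clamp_last]
  simp

lemma weight_nonneg (hp0 : ∀ i, 0 ≤ p0 i) (hP : ∀ s i j, 0 ≤ Pm s i j) (k : ℕ)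
    (path : Fin (k + 1) → Fin N) : 0 ≤ weight Pm ψ p0 k path :=
  mul_nonneg (hp0 _) (Finset.prod_nonneg fun _ _ => hP _ _ _)

lemma weight_snoc (k : ℕ) (q : Fin (k + 1) → Fin N) (j : Fin N) :
    weight Pm ψ p0 (k + 1) (Fin.snoc q j) =
      weight Pm ψ p0 k q * Pm (ψ (k + 1)) (q (Fin.last k)) j := by
  unfold weight
  rw [Fin.prod_univ_castSucc]
  have h0 : (Fin.snoc q j : Fin (k + 2) → Fin N) 0 = q 0 := by
    simpa using snoc_nat (N := N) q j (Nat.zero_le k) (by omega)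
  rw [h0]
  simp only [Fin.snoc_castSucc, Fin.succ_castSucc, Fin.succ_last, Fin.snoc_last,
    Fin.coe_castSucc, Fin.val_last]
  ring

lemma sum_snoc_split (k : ℕ) (f : (Fin (k + 2) → Fin N) → ℝ) :
    ∑ path : Fin (k + 2) → Fin N, f path =
      ∑ q : Fin (k + 1) → Fin N, ∑ j : Fin N, f (Fin.snoc q j) := by
  rw [← Equiv.sum_comp (Fin.snocEquiv (fun _ => Fin N)) f, Fintype.sum_prod_type,
    Finset.sum_comm]
  rfl

/-- Tower property of `pexp`. -/
lemma pexp_tower (k : ℕ) (g : (ℕ → Fin N) → Fin N → ℝ)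
    (hg : ∀ ω ω', (∀ t, t ≤ k → ω t = ω' t) → g ω = g ω') :
    pexp Pm ψ p0 (k + 1) (fun ω => g ω (ω (k + 1))) =
      pexp Pm ψ p0 k (fun ω => ∑ j, Pm (ψ (k + 1)) (ω k) j * g ω j) := by
  rw [pexp_def, pexp_def, sum_snoc_split]
  apply Finset.sum_congr rfl
  intro q _
  rw [Finset.mul_sum]
  apply Finset.sum_congr rfl
  intro j _
  rw [weight_snoc, clamp_snoc_last]
  have hgq : g (clamp (k + 1) (Fin.snoc q j)) = g (clamp k q) :=
    hg _ _ (fun t ht => clamp_snoc_le q j ht)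
  rw [hgq, clamp_last]
  ring

lemma pexp_zero (g : (ℕ → Fin N) → ℝ) :
    pexp Pm ψ p0 0 g = ∑ i, p0 i * g (fun _ => i) := by
  rw [pexp_def, ← Equiv.sum_comp (Equiv.funUnique (Fin 1) (Fin N)).symm]
  apply Finset.sum_congr rfl
  intro i _
  have h1 : weight Pm ψ p0 0 ((Equiv.funUnique (Fin 1) (Fin N)).symm i) = p0 i := by
    simp [weight]
  rw [h1]
  congr 1

/-- Expectation of a function of the last mode. -/
lemma pexp_fn_last (k : ℕ) (h : Fin N → ℝ) :
    pexp Pm ψ p0 k (fun ω => h (ω k)) = ∑ i, pdist Pm ψ p0 k i * h i := by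
  induction k generalizing h with
  | zero => rw [pexp_zero]; rfl
  | succ k ih =>
    rw [pexp_tower Pm ψ p0 k (fun _ j => h j) (fun _ _ _ => rfl),
      ih (fun a => ∑ j, Pm (ψ (k + 1)) a j * h j)]
    show _ = ∑ i, Matrix.vecMul (pdist Pm ψ p0 k) (Pm (ψ (k + 1))) i * h i
    simp only [Matrix.vecMul, dotProduct, Finset.mul_sum]
    rw [Finset.sum_comm]
    apply Finset.sum_congr rfl
    intro j _
    rw [Finset.sum_mul]
    apply Finset.sum_congr rfl
    intro a _
    ring

lemma pexp_sub (k : ℕ) (f g : (ℕ → Fin N) → ℝ) :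
    pexp Pm ψ p0 k (fun ω => f ω - g ω) = pexp Pm ψ p0 k f - pexp Pm ψ p0 k g := by
  rw [pexp_def, pexp_def, pexp_def, ← Finset.sum_sub_distrib]
  exact Finset.sum_congr rfl fun q _ => by ring

lemma pexp_add (k : ℕ) (f g : (ℕ → Fin N) → ℝ) :
    pexp Pm ψ p0 k (fun ω => f ω + g ω) = pexp Pm ψ p0 k f + pexp Pm ψ p0 k g := by
  rw [pexp_def, pexp_def, pexp_def, ← Finset.sum_add_distrib]
  exact Finset.sum_congr rfl fun q _ => by ring

lemma pexp_nonneg (hp0 : ∀ i, 0 ≤ p0 i) (hP : ∀ s i j, 0 ≤ Pm s i j) (k : ℕ)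
    {f : (ℕ → Fin N) → ℝ} (hf : ∀ ω, 0 ≤ f ω) : 0 ≤ pexp Pm ψ p0 k f :=
  Finset.sum_nonneg fun q _ => mul_nonneg (weight_nonneg Pm ψ p0 hp0 hP k q) (hf _)

lemma pexp_zero_fn (k : ℕ) : pexp Pm ψ p0 k (fun _ => (0:ℝ)) = 0 := by
  rw [pexp_def]
  simp

end PexpSection





section Construction
variable {n m p N J : ℕ} (Am : Fin N → Matrix (Fin n) (Fin n) ℝ)
  (Bm : Fin N → Matrix (Fin n) (Fin m) ℝ) (Cm : Fin N → Matrix (Fin p) (Fin n) ℝ)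
  (Dm : Fin N → Matrix (Fin p) (Fin m) ℝ) (Pm : Fin J → Matrix (Fin N) (Fin N) ℝ)
  (ψ : ℕ → Fin J) (p0 : Fin N → ℝ)

/-- `X̃_ψ(a, l+1, T)` -/
def Xtil (T : ℕ) (a : Fin N) (l : ℕ) : Matrix (Fin n) (Fin n) ℝ :=
  ∑ j, Pm (ψ (l + 1)) a j • ric Am Bm Cm Dm Pm ψ j (l + 1) T

/-- worst-case gain -/
def gainK (T : ℕ) (a : Fin N) (l : ℕ) : Matrix (Fin m) (Fin n) ℝ :=
  (opW Bm Dm a (Xtil Am Bm Cm Dm Pm ψ T a l))⁻¹ *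
    opR Am Bm Cm Dm a (Xtil Am Bm Cm Dm Pm ψ T a l)

/-- worst-case closed-loop trajectory started by an impulse at time `k` in mode `i` -/
def ytraj (T k : ℕ) (i : Fin N) (v : Fin m → ℝ) : ℕ → (ℕ → Fin N) → Fin n → ℝ
  | 0 => fun _ => 0
  | l + 1 => fun ω =>
      if l < k then 0
      else if l = k then (if ω k = i then Bm i *ᵥ v else 0)
      else if l ≤ T then
        opF Am Bm Cm Dm (ω l) (Xtil Am Bm Cm Dm Pm ψ T (ω l) l) *ᵥ
          ytraj T k i v l ω
      else 0

/-- worst-case disturbance -/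
def wdist (T k : ℕ) (i : Fin N) (v : Fin m → ℝ) (l : ℕ) (ω : ℕ → Fin N) :
    Fin m → ℝ :=
  if l < k then 0
  else if l = k then (if ω k = i then v else 0)
  else if l ≤ T then
    gainK Am Bm Cm Dm Pm ψ T (ω l) l *ᵥ ytraj Am Bm Cm Dm Pm ψ T k i v l ω
  else 0

variable (T k : ℕ) (i : Fin N) (v : Fin m → ℝ)

lemma ytraj_le_k {l : ℕ} (hl : l ≤ k) (ω : ℕ → Fin N) :
    ytraj Am Bm Cm Dm Pm ψ T k i v l ω = 0 := by
  cases l with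
  | zero => rfl
  | succ l =>
    have h : l < k := hl
    simp [ytraj, h]

lemma ytraj_dep : ∀ (l : ℕ) (ω ω' : ℕ → Fin N), (∀ t, t < l → ω t = ω' t) →
    ytraj Am Bm Cm Dm Pm ψ T k i v l ω = ytraj Am Bm Cm Dm Pm ψ T k i v l ω' := by
  intro l
  induction l with
  | zero => intro ω ω' _; rfl
  | succ l ih =>
    intro ω ω' h
    have hy := ih ω ω' (fun t ht => h t (ht.trans (Nat.lt_succ_self l)))
    have hl : ω l = ω' l := h l (Nat.lt_succ_self l)
    by_cases h1 : l < k
    · simp [ytraj, h1]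
    · by_cases h2 : l = k
      · have hk : ω k = ω' k := h2 ▸ hl
        simp [ytraj, h1, h2, hk]
      · by_cases h3 : l ≤ T <;> simp [ytraj, h1, h2, h3, hy, hl]

lemma wdist_adapted : Adapted (wdist Am Bm Cm Dm Pm ψ T k i v) := by
  intro l ω ω' h
  have hy := ytraj_dep Am Bm Cm Dm Pm ψ T k i v l ω ω'
    (fun t ht => h t (le_of_lt ht))
  by_cases h1 : l < k
  · simp [wdist, h1]
  · by_cases h2 : l = k
    · have hk : ω k = ω' k := h2 ▸ (h l le_rfl)
      simp [wdist, h1, h2, hk]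
    · by_cases h3 : l ≤ T <;> simp [wdist, h1, h2, h3, hy, h l le_rfl]

lemma traj_eq_ytraj : ∀ l, l ≤ T + 1 → ∀ ω,
    traj Am Bm (fun _ => 0) (wdist Am Bm Cm Dm Pm ψ T k i v) l ω =
      ytraj Am Bm Cm Dm Pm ψ T k i v l ω := by
  intro l
  induction l with
  | zero => intro _ _; rfl
  | succ l ih =>
    intro hl ω
    have hl' : l ≤ T + 1 := by omega
    rw [traj, ih hl' ω]
    by_cases h1 : l < k
    · have hyl : ytraj Am Bm Cm Dm Pm ψ T k i v l ω = 0 :=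
        ytraj_le_k Am Bm Cm Dm Pm ψ T k i v (le_of_lt h1) ω
      simp [ytraj, wdist, h1, hyl]
    · by_cases h2 : l = k
      · have hyl : ytraj Am Bm Cm Dm Pm ψ T k i v l ω = 0 :=
          ytraj_le_k Am Bm Cm Dm Pm ψ T k i v (le_of_eq h2) ω
        rw [h2] at hyl
        by_cases h4 : ω k = i <;>
          simp [ytraj, wdist, h1, h2, hyl, h4]
      · have h3 : l ≤ T := by omega
        simp only [ytraj, wdist, if_neg h1, if_neg h2, if_pos h3]
        unfold opF gainK
        rw [Matrix.add_mulVec, Matrix.mulVec_mulVec, Matrix.mul_assoc]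

end Construction


section ValueSection
variable {n m p N J : ℕ} (Am : Fin N → Matrix (Fin n) (Fin n) ℝ)
  (Bm : Fin N → Matrix (Fin n) (Fin m) ℝ) (Cm : Fin N → Matrix (Fin p) (Fin n) ℝ)
  (Dm : Fin N → Matrix (Fin p) (Fin m) ℝ) (Pm : Fin J → Matrix (Fin N) (Fin N) ℝ)
  (ψ : ℕ → Fin J) (p0 : Fin N → ℝ)

lemma dot_sum_smul_mulVec {a : ℕ} {ι : Type} [Fintype ι] (c : ι → ℝ)
    (M : ι → Matrix (Fin a) (Fin a) ℝ) (x : Fin a → ℝ) :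
    x ⬝ᵥ (∑ j, c j • M j) *ᵥ x = ∑ j, c j * (x ⬝ᵥ M j *ᵥ x) := by
  have h1 := map_sum (AddMonoidHom.mk' (fun (A : Matrix (Fin a) (Fin a) ℝ) => A *ᵥ x)
    (fun A B => Matrix.add_mulVec A B x)) (fun j => c j • M j) Finset.univ
  simp only [AddMonoidHom.mk'_apply] at h1
  rw [h1]
  have h2 := map_sum (AddMonoidHom.mk' (fun (u : Fin a → ℝ) => x ⬝ᵥ u)
    (fun u w => dotProduct_add x u w)) (fun j => (c j • M j) *ᵥ x) Finset.univ
  simp only [AddMonoidHom.mk'_apply] at h2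
  rw [h2]
  refine Finset.sum_congr rfl fun j _ => ?_
  rw [Matrix.smul_mulVec, dotProduct_smul, smul_eq_mul]

lemma Xtil_symm (T : ℕ) (a : Fin N) (l : ℕ) :
    (Xtil Am Bm Cm Dm Pm ψ T a l)ᵀ = Xtil Am Bm Cm Dm Pm ψ T a l :=
  ricSum_symm Am Bm Cm Dm Pm ψ a (ψ (l + 1)) (l + 1) T

/-- conditional expected value of the quadratic value function along the worst-case
trajectory -/
def eval (T k : ℕ) (i : Fin N) (v : Fin m → ℝ) (l : ℕ) : ℝ :=
  pexp Pm ψ p0 l (fun ω => ytraj Am Bm Cm Dm Pm ψ T k i v l ω ⬝ᵥ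
    (ric Am Bm Cm Dm Pm ψ (ω l) l T) *ᵥ ytraj Am Bm Cm Dm Pm ψ T k i v l ω)

lemma eval_top (T k : ℕ) (i : Fin N) (v : Fin m → ℝ) :
    eval Am Bm Cm Dm Pm ψ p0 T k i v (T + 1) = 0 := by
  unfold eval
  have h : (fun ω => ytraj Am Bm Cm Dm Pm ψ T k i v (T + 1) ω ⬝ᵥ
      (ric Am Bm Cm Dm Pm ψ (ω (T + 1)) (T + 1) T) *ᵥ
        ytraj Am Bm Cm Dm Pm ψ T k i v (T + 1) ω) = fun _ => (0:ℝ) := by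
    funext ω
    rw [ric_top, Matrix.zero_mulVec, dotProduct_zero]
  rw [h, pexp_zero_fn]

/-- tower-property form of `eval (l+1)`. -/
lemma eval_succ_tower (T k : ℕ) (i : Fin N) (v : Fin m → ℝ) (l : ℕ) :
    eval Am Bm Cm Dm Pm ψ p0 T k i v (l + 1) =
      pexp Pm ψ p0 l (fun ω => ytraj Am Bm Cm Dm Pm ψ T k i v (l + 1) ω ⬝ᵥ
        (Xtil Am Bm Cm Dm Pm ψ T (ω l) l) *ᵥ ytraj Am Bm Cm Dm Pm ψ T k i v (l + 1) ω) := by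
  unfold eval
  rw [pexp_tower Pm ψ p0 l
    (fun ω j => ytraj Am Bm Cm Dm Pm ψ T k i v (l + 1) ω ⬝ᵥ
      (ric Am Bm Cm Dm Pm ψ j (l + 1) T) *ᵥ ytraj Am Bm Cm Dm Pm ψ T k i v (l + 1) ω)
    (fun ω ω' h => by
      have hdep := ytraj_dep Am Bm Cm Dm Pm ψ T k i v (l + 1) ω ω'
        (fun t ht => h t (Nat.lt_succ_iff.mp ht))
      funext j
      beta_reduce
      rw [hdep])]
  congr 1
  funext ω
  rw [Xtil, dot_sum_smul_mulVec]

/-- the one-step dynamic programming identity. -/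
lemma eval_step (T k : ℕ) (i : Fin N) (v : Fin m → ℝ) {l : ℕ} (h1 : k < l) (h2 : l ≤ T)
    (hW : ∀ a2 : Fin N, IsUnit (opW Bm Dm a2 (Xtil Am Bm Cm Dm Pm ψ T a2 l)).det) :
    eval Am Bm Cm Dm Pm ψ p0 T k i v l =
      energy Pm ψ p0 (errv Am Bm Cm Dm (fun _ => 0) (wdist Am Bm Cm Dm Pm ψ T k i v)) l -
        energy Pm ψ p0 (wdist Am Bm Cm Dm Pm ψ T k i v) l +
        eval Am Bm Cm Dm Pm ψ p0 T k i v (l + 1) := by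
  rw [eval_succ_tower]
  unfold energy
  rw [← pexp_sub, ← pexp_add]
  unfold eval
  congr 1
  funext ω
  -- pathwise completion of squares
  have hXs : (Xtil Am Bm Cm Dm Pm ψ T (ω l) l)ᵀ = Xtil Am Bm Cm Dm Pm ψ T (ω l) l :=
    Xtil_symm Am Bm Cm Dm Pm ψ T (ω l) l
  have hy : traj Am Bm (fun _ => 0) (wdist Am Bm Cm Dm Pm ψ T k i v) l ω =
      ytraj Am Bm Cm Dm Pm ψ T k i v l ω :=
    traj_eq_ytraj Am Bm Cm Dm Pm ψ T k i v l (by omega) ω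
  have hnl : ¬ l < k := by omega
  have hne : ¬ l = k := by omega
  have hw : wdist Am Bm Cm Dm Pm ψ T k i v l ω =
      gainK Am Bm Cm Dm Pm ψ T (ω l) l *ᵥ ytraj Am Bm Cm Dm Pm ψ T k i v l ω := by
    simp [wdist, hnl, hne, h2]
  have hz : errv Am Bm Cm Dm (fun _ => 0) (wdist Am Bm Cm Dm Pm ψ T k i v) l ω =
      (Cm (ω l) + Dm (ω l) * gainK Am Bm Cm Dm Pm ψ T (ω l) l) *ᵥ
        ytraj Am Bm Cm Dm Pm ψ T k i v l ω := by
    unfold errv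
    rw [hy, hw, Matrix.add_mulVec, Matrix.mulVec_mulVec]
  have hy1 : ytraj Am Bm Cm Dm Pm ψ T k i v (l + 1) ω =
      opF Am Bm Cm Dm (ω l) (Xtil Am Bm Cm Dm Pm ψ T (ω l) l) *ᵥ
        ytraj Am Bm Cm Dm Pm ψ T k i v l ω := by
    simp [ytraj, hnl, hne, h2]
  rw [ric_unfold Am Bm Cm Dm Pm ψ (ω l) h2]
  rw [show (∑ j, Pm (ψ (l + 1)) (ω l) j • ric Am Bm Cm Dm Pm ψ j (l + 1) T) =
    Xtil Am Bm Cm Dm Pm ψ T (ω l) l from rfl]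
  rw [opS_decomp Am Bm Cm Dm (ω l) hXs (hW (ω l))]
  rw [show ((opW Bm Dm (ω l) (Xtil Am Bm Cm Dm Pm ψ T (ω l) l))⁻¹ *
      opR Am Bm Cm Dm (ω l) (Xtil Am Bm Cm Dm Pm ψ T (ω l) l)) =
    gainK Am Bm Cm Dm Pm ψ T (ω l) l from rfl]
  rw [Matrix.sub_mulVec, Matrix.add_mulVec, dotProduct_sub, dotProduct_add]
  rw [quad_transform, quad_transform', quad_transform']
  rw [hz, hw, hy1]
  ring

lemma energy_w_lt (T k : ℕ) (i : Fin N) (v : Fin m → ℝ) {l : ℕ} (hl : l < k) :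
    energy Pm ψ p0 (wdist Am Bm Cm Dm Pm ψ T k i v) l = 0 := by
  unfold energy
  have h : (fun ω => wdist Am Bm Cm Dm Pm ψ T k i v l ω ⬝ᵥ
      wdist Am Bm Cm Dm Pm ψ T k i v l ω) = fun _ => (0:ℝ) := by
    funext ω
    simp [wdist, hl]
  rw [h, pexp_zero_fn]

lemma energy_w_gt (T k : ℕ) (i : Fin N) (v : Fin m → ℝ) (hk : k ≤ T) {l : ℕ}
    (hl : T < l) :
    energy Pm ψ p0 (wdist Am Bm Cm Dm Pm ψ T k i v) l = 0 := by
  unfold energy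
  have h : (fun ω => wdist Am Bm Cm Dm Pm ψ T k i v l ω ⬝ᵥ
      wdist Am Bm Cm Dm Pm ψ T k i v l ω) = fun _ => (0:ℝ) := by
    funext ω
    have h1 : ¬ l < k := by omega
    have h2 : ¬ l = k := by omega
    have h3 : ¬ l ≤ T := by omega
    simp [wdist, h1, h2, h3]
  rw [h, pexp_zero_fn]

lemma energy_z_lt (T k : ℕ) (i : Fin N) (v : Fin m → ℝ) (hk : k ≤ T) {l : ℕ} (hl : l < k) :
    energy Pm ψ p0 (errv Am Bm Cm Dm (fun _ => 0) (wdist Am Bm Cm Dm Pm ψ T k i v)) l = 0 := by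
  unfold energy
  have h : (fun ω => errv Am Bm Cm Dm (fun _ => 0) (wdist Am Bm Cm Dm Pm ψ T k i v) l ω ⬝ᵥ
      errv Am Bm Cm Dm (fun _ => 0) (wdist Am Bm Cm Dm Pm ψ T k i v) l ω) = fun _ => (0:ℝ) := by
    funext ω
    have hy : traj Am Bm (fun _ => 0) (wdist Am Bm Cm Dm Pm ψ T k i v) l ω =
        ytraj Am Bm Cm Dm Pm ψ T k i v l ω :=
      traj_eq_ytraj Am Bm Cm Dm Pm ψ T k i v l (by omega) ω
    have hy0 : ytraj Am Bm Cm Dm Pm ψ T k i v l ω = 0 :=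
      ytraj_le_k Am Bm Cm Dm Pm ψ T k i v (le_of_lt hl) ω
    unfold errv
    rw [hy, hy0]
    simp [wdist, hl]
  rw [h, pexp_zero_fn]

lemma energy_w_k (T k : ℕ) (i : Fin N) (v : Fin m → ℝ) :
    energy Pm ψ p0 (wdist Am Bm Cm Dm Pm ψ T k i v) k =
      pdist Pm ψ p0 k i * (v ⬝ᵥ v) := by
  unfold energy
  have h : (fun ω => wdist Am Bm Cm Dm Pm ψ T k i v k ω ⬝ᵥ
      wdist Am Bm Cm Dm Pm ψ T k i v k ω) =
      fun ω => (fun a => if a = i then v ⬝ᵥ v else 0) (ω k) := by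
    funext ω
    by_cases h4 : ω k = i <;> simp [wdist, h4]
  rw [h]
  beta_reduce
  rw [pexp_fn_last Pm ψ p0 k (fun a => if a = i then v ⬝ᵥ v else 0)]
  simp [mul_ite, Finset.sum_ite_eq']

lemma energy_z_k (T k : ℕ) (i : Fin N) (v : Fin m → ℝ) (hk : k ≤ T) :
    energy Pm ψ p0 (errv Am Bm Cm Dm (fun _ => 0) (wdist Am Bm Cm Dm Pm ψ T k i v)) k =
      pdist Pm ψ p0 k i * ((Dm i *ᵥ v) ⬝ᵥ (Dm i *ᵥ v)) := by
  unfold energy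
  have h : (fun ω => errv Am Bm Cm Dm (fun _ => 0) (wdist Am Bm Cm Dm Pm ψ T k i v) k ω ⬝ᵥ
      errv Am Bm Cm Dm (fun _ => 0) (wdist Am Bm Cm Dm Pm ψ T k i v) k ω) =
      fun ω => (fun a => if a = i then (Dm i *ᵥ v) ⬝ᵥ (Dm i *ᵥ v) else 0) (ω k) := by
    funext ω
    have hy : traj Am Bm (fun _ => 0) (wdist Am Bm Cm Dm Pm ψ T k i v) k ω =
        ytraj Am Bm Cm Dm Pm ψ T k i v k ω :=
      traj_eq_ytraj Am Bm Cm Dm Pm ψ T k i v k (by omega) ω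
    have hy0 : ytraj Am Bm Cm Dm Pm ψ T k i v k ω = 0 :=
      ytraj_le_k Am Bm Cm Dm Pm ψ T k i v le_rfl ω
    unfold errv
    rw [hy, hy0]
    by_cases h4 : ω k = i <;> simp [wdist, h4]
  rw [h]
  beta_reduce
  rw [pexp_fn_last Pm ψ p0 k
    (fun a => if a = i then (Dm i *ᵥ v) ⬝ᵥ (Dm i *ᵥ v) else 0)]
  simp [mul_ite, Finset.sum_ite_eq']

lemma eval_k_succ (T k : ℕ) (i : Fin N) (v : Fin m → ℝ) :
    eval Am Bm Cm Dm Pm ψ p0 T k i v (k + 1) =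
      pdist Pm ψ p0 k i *
        ((Bm i *ᵥ v) ⬝ᵥ (Xtil Am Bm Cm Dm Pm ψ T i k) *ᵥ (Bm i *ᵥ v)) := by
  rw [eval_succ_tower]
  have h : (fun ω => ytraj Am Bm Cm Dm Pm ψ T k i v (k + 1) ω ⬝ᵥ
      (Xtil Am Bm Cm Dm Pm ψ T (ω k) k) *ᵥ ytraj Am Bm Cm Dm Pm ψ T k i v (k + 1) ω) =
      fun ω => (fun a => if a = i then
        (Bm i *ᵥ v) ⬝ᵥ (Xtil Am Bm Cm Dm Pm ψ T i k) *ᵥ (Bm i *ᵥ v) else 0) (ω k) := by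
    funext ω
    have hy1 : ytraj Am Bm Cm Dm Pm ψ T k i v (k + 1) ω =
        (if ω k = i then Bm i *ᵥ v else 0) := by
      simp [ytraj]
    rw [hy1]
    by_cases h4 : ω k = i <;> simp [h4]
  rw [h]
  beta_reduce
  rw [pexp_fn_last Pm ψ p0 k (fun a => if a = i then
    (Bm i *ᵥ v) ⬝ᵥ (Xtil Am Bm Cm Dm Pm ψ T i k) *ᵥ (Bm i *ᵥ v) else 0)]
  simp [mul_ite, Finset.sum_ite_eq']

/-- telescoping the dynamic programming identity. -/
lemma eval_telescope (T k : ℕ) (i : Fin N) (v : Fin m → ℝ) (hk : k ≤ T)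
    (hW : ∀ l, k < l → l ≤ T → ∀ a2 : Fin N,
      IsUnit (opW Bm Dm a2 (Xtil Am Bm Cm Dm Pm ψ T a2 l)).det) :
    eval Am Bm Cm Dm Pm ψ p0 T k i v (k + 1) =
      ∑ l ∈ Finset.Ico (k + 1) (T + 1),
        (energy Pm ψ p0 (errv Am Bm Cm Dm (fun _ => 0) (wdist Am Bm Cm Dm Pm ψ T k i v)) l -
          energy Pm ψ p0 (wdist Am Bm Cm Dm Pm ψ T k i v) l) := by
  suffices hgen : ∀ d, k + 1 + d ≤ T + 1 →
      eval Am Bm Cm Dm Pm ψ p0 T k i v (k + 1) =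
        (∑ l ∈ Finset.Ico (k + 1) (k + 1 + d),
          (energy Pm ψ p0 (errv Am Bm Cm Dm (fun _ => 0) (wdist Am Bm Cm Dm Pm ψ T k i v)) l -
            energy Pm ψ p0 (wdist Am Bm Cm Dm Pm ψ T k i v) l)) +
          eval Am Bm Cm Dm Pm ψ p0 T k i v (k + 1 + d) by
    have h := hgen (T - k) (by omega)
    rw [show k + 1 + (T - k) = T + 1 by omega] at h
    rw [h, eval_top]
    ring
  intro d
  induction d with
  | zero => intro _; simp
  | succ d ih =>
    intro hd
    have hih := ih (by omega)
    have hstep := eval_step Am Bm Cm Dm Pm ψ p0 T k i v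
      (show k < k + 1 + d by omega) (show k + 1 + d ≤ T by omega)
      (hW (k + 1 + d) (by omega) (by omega))
    rw [show k + 1 + (d + 1) = k + 1 + d + 1 by omega]
    rw [hih, hstep, Finset.sum_Ico_succ_top (by omega : k + 1 ≤ k + 1 + d)]
    ring

end ValueSection


section KeySection
variable {n m p N J : ℕ} (Am : Fin N → Matrix (Fin n) (Fin n) ℝ)
  (Bm : Fin N → Matrix (Fin n) (Fin m) ℝ) (Cm : Fin N → Matrix (Fin p) (Fin n) ℝ)
  (Dm : Fin N → Matrix (Fin p) (Fin m) ℝ) (Pm : Fin J → Matrix (Fin N) (Fin N) ℝ)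
  (ψ : ℕ → Fin J) (p0 : Fin N → ℝ)

lemma energy_nonneg (hp0 : ∀ i, 0 ≤ p0 i) (hP : ∀ s i j, 0 ≤ Pm s i j)
    {d : ℕ} (v : ℕ → (ℕ → Fin N) → Fin d → ℝ) (l : ℕ) :
    0 ≤ energy Pm ψ p0 v l :=
  pexp_nonneg Pm ψ p0 hp0 hP l (fun ω => dot_self_nonneg _)

/-- The central inequality extracted from strict contractiveness. -/
lemma key_ineq (hp0nn : ∀ i, 0 ≤ p0 i) (hPnn : ∀ s i j, 0 ≤ Pm s i j)
    (hpos : ∀ (k : ℕ) (i : Fin N), 0 < pdist Pm ψ p0 k i)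
    (γ : ℝ) (hγ0 : 0 < γ) (hγ1 : γ < 1)
    (hcontr : ContractiveWith Am Bm Cm Dm Pm γ ψ p0)
    (T k : ℕ) (hk : k ≤ T) (i : Fin N) (v : Fin m → ℝ)
    (hW : ∀ l, k < l → l ≤ T → ∀ a2 : Fin N,
      IsUnit (opW Bm Dm a2 (Xtil Am Bm Cm Dm Pm ψ T a2 l)).det) :
    (Dm i *ᵥ v) ⬝ᵥ (Dm i *ᵥ v) +
      (Bm i *ᵥ v) ⬝ᵥ (Xtil Am Bm Cm Dm Pm ψ T i k) *ᵥ (Bm i *ᵥ v) ≤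
      γ ^ 2 * (v ⬝ᵥ v) := by
  have hadapted := wdist_adapted Am Bm Cm Dm Pm ψ T k i v
  have hwvan : ∀ l ∉ Finset.range (T + 1),
      energy Pm ψ p0 (wdist Am Bm Cm Dm Pm ψ T k i v) l = 0 := by
    intro l hl
    exact energy_w_gt Am Bm Cm Dm Pm ψ p0 T k i v hk
      (by simpa [Finset.mem_range, Nat.lt_succ_iff] using hl)
  have hsumw : Summable (fun l => energy Pm ψ p0 (wdist Am Bm Cm Dm Pm ψ T k i v) l) :=
    summable_of_ne_finset_zero hwvan
  obtain ⟨hsumz, hle⟩ := hcontr (wdist Am Bm Cm Dm Pm ψ T k i v) hadapted hsumw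
  have htsw : ∑' l, energy Pm ψ p0 (wdist Am Bm Cm Dm Pm ψ T k i v) l =
      ∑ l ∈ Finset.range (T + 1), energy Pm ψ p0 (wdist Am Bm Cm Dm Pm ψ T k i v) l :=
    tsum_eq_sum hwvan
  have hpart : ∑ l ∈ Finset.range (T + 1),
      energy Pm ψ p0 (errv Am Bm Cm Dm (fun _ => 0) (wdist Am Bm Cm Dm Pm ψ T k i v)) l ≤
      ∑' l, energy Pm ψ p0 (errv Am Bm Cm Dm (fun _ => 0) (wdist Am Bm Cm Dm Pm ψ T k i v)) l :=
    Summable.sum_le_tsum _ (fun l _ => energy_nonneg Pm ψ p0 hp0nn hPnn _ l) hsumz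
  -- restrict the sums to `Ico k (T+1)`
  have hsub : Finset.Ico k (T + 1) ⊆ Finset.range (T + 1) := by
    intro l hl
    simp only [Finset.mem_Ico] at hl
    simpa [Finset.mem_range] using hl.2
  have hzr : ∑ l ∈ Finset.range (T + 1),
      energy Pm ψ p0 (errv Am Bm Cm Dm (fun _ => 0) (wdist Am Bm Cm Dm Pm ψ T k i v)) l =
      ∑ l ∈ Finset.Ico k (T + 1),
      energy Pm ψ p0 (errv Am Bm Cm Dm (fun _ => 0) (wdist Am Bm Cm Dm Pm ψ T k i v)) l := by
    refine (Finset.sum_subset hsub ?_).symm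
    intro l hl1 hl2
    have hlk : l < k := by
      simp only [Finset.mem_range] at hl1
      simp only [Finset.mem_Ico, not_and, not_lt] at hl2
      by_contra hc
      omega
    exact energy_z_lt Am Bm Cm Dm Pm ψ p0 T k i v hk hlk
  have hwr : ∑ l ∈ Finset.range (T + 1),
      energy Pm ψ p0 (wdist Am Bm Cm Dm Pm ψ T k i v) l =
      ∑ l ∈ Finset.Ico k (T + 1), energy Pm ψ p0 (wdist Am Bm Cm Dm Pm ψ T k i v) l := by
    refine (Finset.sum_subset hsub ?_).symm
    intro l hl1 hl2
    have hlk : l < k := by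
      simp only [Finset.mem_range] at hl1
      simp only [Finset.mem_Ico, not_and, not_lt] at hl2
      by_contra hc
      omega
    exact energy_w_lt Am Bm Cm Dm Pm ψ p0 T k i v hlk
  have hmain : ∑ l ∈ Finset.Ico k (T + 1),
      energy Pm ψ p0 (errv Am Bm Cm Dm (fun _ => 0) (wdist Am Bm Cm Dm Pm ψ T k i v)) l ≤
      γ ^ 2 * ∑ l ∈ Finset.Ico k (T + 1),
        energy Pm ψ p0 (wdist Am Bm Cm Dm Pm ψ T k i v) l := by
    rw [← hzr, ← hwr]
    calc ∑ l ∈ Finset.range (T + 1),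
        energy Pm ψ p0 (errv Am Bm Cm Dm (fun _ => 0) (wdist Am Bm Cm Dm Pm ψ T k i v)) l
        ≤ ∑' l, energy Pm ψ p0 (errv Am Bm Cm Dm (fun _ => 0) (wdist Am Bm Cm Dm Pm ψ T k i v)) l := hpart
      _ ≤ γ ^ 2 * ∑' l, energy Pm ψ p0 (wdist Am Bm Cm Dm Pm ψ T k i v) l := hle
      _ = γ ^ 2 * ∑ l ∈ Finset.range (T + 1),
            energy Pm ψ p0 (wdist Am Bm Cm Dm Pm ψ T k i v) l := by rw [htsw]
  -- split off the first term
  rw [Finset.sum_eq_sum_Ico_succ_bot (by omega : k < T + 1),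
    Finset.sum_eq_sum_Ico_succ_bot (by omega : k < T + 1)] at hmain
  -- telescope
  have htel := eval_telescope Am Bm Cm Dm Pm ψ p0 T k i v hk hW
  rw [Finset.sum_sub_distrib] at htel
  have hS1w : 0 ≤ ∑ l ∈ Finset.Ico (k + 1) (T + 1),
      energy Pm ψ p0 (wdist Am Bm Cm Dm Pm ψ T k i v) l :=
    Finset.sum_nonneg fun l _ => energy_nonneg Pm ψ p0 hp0nn hPnn _ l
  have hγ2 : γ ^ 2 ≤ 1 := by nlinarith
  have hfinal : energy Pm ψ p0
        (errv Am Bm Cm Dm (fun _ => 0) (wdist Am Bm Cm Dm Pm ψ T k i v)) k -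
      γ ^ 2 * energy Pm ψ p0 (wdist Am Bm Cm Dm Pm ψ T k i v) k +
      eval Am Bm Cm Dm Pm ψ p0 T k i v (k + 1) ≤ 0 := by
    have hzS : ∑ l ∈ Finset.Ico (k + 1) (T + 1),
        energy Pm ψ p0 (errv Am Bm Cm Dm (fun _ => 0) (wdist Am Bm Cm Dm Pm ψ T k i v)) l ≥ 0 :=
      Finset.sum_nonneg fun l _ => energy_nonneg Pm ψ p0 hp0nn hPnn _ l
    nlinarith [hmain, htel, hS1w, hγ2]
  rw [energy_z_k Am Bm Cm Dm Pm ψ p0 T k i v hk, energy_w_k Am Bm Cm Dm Pm ψ p0 T k i v,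
    eval_k_succ Am Bm Cm Dm Pm ψ p0 T k i v] at hfinal
  have hp := hpos k i
  nlinarith [hfinal, hp]

end KeySection

/-- (Lemma 4.) Assume `p_i(k) > 0` for all `ψ ∈ Ψ`, `i`, `k`. If the switched
system is uniformly mean square strictly contractive with constant `γ ∈ (0,1)`, then with
`ν = 1 − γ²` one has `𝒲(i, X̃_ψ(i,k+1,T)) ≥ ν I` (in particular `𝒲(i, X̃_ψ(i,k+1,T))` is
positive definite, hence invertible) for all `ψ ∈ Ψ`, `i ∈ 𝒩`, `T ∈ ℕ₀`, `0 ≤ k ≤ T`. -/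
theorem statement9 (n m p N J : ℕ) (Am : Fin N → Matrix (Fin n) (Fin n) ℝ)
    (Bm : Fin N → Matrix (Fin n) (Fin m) ℝ) (Cm : Fin N → Matrix (Fin p) (Fin n) ℝ)
    (Dm : Fin N → Matrix (Fin p) (Fin m) ℝ) (Pm : Fin J → Matrix (Fin N) (Fin N) ℝ)
    (Ψ : Set (ℕ → Fin J)) (hΨ : Ψ.Nonempty)
    (hPnn : ∀ (s : Fin J) (i j : Fin N), 0 ≤ Pm s i j)
    (hProw : ∀ (s : Fin J) (i : Fin N), ∑ j, Pm s i j = 1)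
    (p0 : Fin N → ℝ) (hp0nn : ∀ i, 0 ≤ p0 i) (hp0sum : ∑ i, p0 i = 1)
    (hpos : ∀ ψ ∈ Ψ, ∀ (k : ℕ) (i : Fin N), 0 < pdist Pm ψ p0 k i)
    (γ : ℝ) (hγ0 : 0 < γ) (hγ1 : γ < 1)
    (hcontr : ∀ ψ ∈ Ψ, ContractiveWith Am Bm Cm Dm Pm γ ψ p0) :
    ∀ ψ ∈ Ψ, ∀ (i : Fin N) (T k : ℕ), k ≤ T →
      (opW Bm Dm i (∑ j, Pm (ψ (k + 1)) i j • ric Am Bm Cm Dm Pm ψ j (k + 1) T) -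
        (1 - γ ^ 2) • 1).PosSemidef ∧
      (opW Bm Dm i (∑ j, Pm (ψ (k + 1)) i j • ric Am Bm Cm Dm Pm ψ j (k + 1) T)).PosDef ∧
      IsUnit (opW Bm Dm i
        (∑ j, Pm (ψ (k + 1)) i j • ric Am Bm Cm Dm Pm ψ j (k + 1) T)).det := by
  intro ψ hψ i T k hk
  suffices main : ∀ d kk, T - kk = d → kk ≤ T → ∀ a : Fin N,
      (opW Bm Dm a (Xtil Am Bm Cm Dm Pm ψ T a kk) - (1 - γ ^ 2) • 1).PosSemidef ∧
        (opW Bm Dm a (Xtil Am Bm Cm Dm Pm ψ T a kk)).PosDef ∧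
        IsUnit (opW Bm Dm a (Xtil Am Bm Cm Dm Pm ψ T a kk)).det by
    exact main (T - k) k rfl hk i
  intro d
  induction d using Nat.strong_induction_on with
  | _ d ih =>
    intro kk hd hkk a
    have hIH : ∀ l, kk < l → l ≤ T → ∀ a2 : Fin N,
        IsUnit (opW Bm Dm a2 (Xtil Am Bm Cm Dm Pm ψ T a2 l)).det :=
      fun l h1 h2 a2 => (ih (T - l) (by omega) l rfl h2 a2).2.2
    have hkey := fun v => key_ineq Am Bm Cm Dm Pm ψ p0 hp0nn hPnn (hpos ψ hψ) γ hγ0 hγ1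
      (hcontr ψ hψ) T kk hkk a v hIH
    have hν : 0 < 1 - γ ^ 2 := by nlinarith
    have hquad : ∀ x : Fin m → ℝ, 0 ≤ x ⬝ᵥ
        (opW Bm Dm a (Xtil Am Bm Cm Dm Pm ψ T a kk) - (1 - γ ^ 2) • 1) *ᵥ x := by
      intro x
      have h1 := hkey x
      rw [opW, Matrix.sub_mulVec, Matrix.sub_mulVec, Matrix.sub_mulVec,
        dotProduct_sub, dotProduct_sub, dotProduct_sub,
        quad_transform, quad_transform', Matrix.one_mulVec,
        Matrix.smul_mulVec, Matrix.one_mulVec, dotProduct_smul, smul_eq_mul]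
      linarith [h1]
    have hquadW : ∀ x : Fin m → ℝ,
        (1 - γ ^ 2) * (x ⬝ᵥ x) ≤ x ⬝ᵥ (opW Bm Dm a (Xtil Am Bm Cm Dm Pm ψ T a kk)) *ᵥ x := by
      intro x
      have h1 := hquad x
      rw [Matrix.sub_mulVec, dotProduct_sub, Matrix.smul_mulVec,
        Matrix.one_mulVec, dotProduct_smul, smul_eq_mul] at h1
      linarith
    have hsym : (opW Bm Dm a (Xtil Am Bm Cm Dm Pm ψ T a kk))ᵀ =
        opW Bm Dm a (Xtil Am Bm Cm Dm Pm ψ T a kk) :=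
      opW_transpose Bm Dm a (Xtil_symm Am Bm Cm Dm Pm ψ T a kk)
    have hsymsub : (opW Bm Dm a (Xtil Am Bm Cm Dm Pm ψ T a kk) - (1 - γ ^ 2) • 1)ᵀ =
        opW Bm Dm a (Xtil Am Bm Cm Dm Pm ψ T a kk) - (1 - γ ^ 2) • 1 := by
      rw [Matrix.transpose_sub, hsym, Matrix.transpose_smul, Matrix.transpose_one]
    have hstar : ∀ x : Fin m → ℝ, star x = x := fun x => funext fun r => rfl
    have hpsd : (opW Bm Dm a (Xtil Am Bm Cm Dm Pm ψ T a kk) - (1 - γ ^ 2) • 1).PosSemidef :=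
      Matrix.PosSemidef.of_dotProduct_mulVec_nonneg (isHermitian_of_transpose hsymsub)
        fun x => by rw [hstar x]; exact hquad x
    have hpd : (opW Bm Dm a (Xtil Am Bm Cm Dm Pm ψ T a kk)).PosDef := by
      refine Matrix.PosDef.of_dotProduct_mulVec_pos (isHermitian_of_transpose hsym) fun x hx => ?_
      rw [hstar x]
      have h2 := hquadW x
      have h3 : 0 < x ⬝ᵥ x := dot_self_pos hx
      nlinarith
    exact ⟨hpsd, hpd, isUnit_iff_ne_zero.mpr (ne_of_gt hpd.det_pos)⟩

end SMJLS
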